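/- Suppose Ω* is nonempty, each A_i has full column rank (i.e., A_i is injective), and α ∈ (0,2). Let the sequence {ξ^k} ⊂ ℝ^{(p+1)m} be generated by iterating, from an arbitrary ξ^0: the parallel splitting ALM step with input ξ^k producing w̃^k and ξ̃^k, followed by the rank-two relaxation step ξ^{k+1} = ξ^k − αℳ(ξ^k − ξ̃^k). Then the sequence {ξ^k} converges to some point ξ^∞ ∈ Ξ*. -/

import Mathlib

open Matrix
open scoped Kronecker

noncomputable section

/-- `Q₀ = [β I_p, e_p; −e_pᵀ, 1/β]`. -/
def Q0 (p : ℕ) (β : ℝ) : Matrix (Fin p ⊕ Unit) (Fin p ⊕ Unit) ℝ :=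
  Matrix.fromBlocks (β • (1 : Matrix (Fin p) (Fin p) ℝ))
    (Matrix.of fun _ _ => (1 : ℝ))
    (Matrix.of fun _ _ => (-1 : ℝ))
    (Matrix.of fun _ _ => 1 / β)

/-- `D₀ = diag(β, …, β, 1/β)`. -/
def D0 (p : ℕ) (β : ℝ) : Matrix (Fin p ⊕ Unit) (Fin p ⊕ Unit) ℝ :=
  Matrix.fromBlocks (β • (1 : Matrix (Fin p) (Fin p) ℝ)) 0 0
    (Matrix.of fun _ _ => 1 / β)

/-- `M₀ = I_{p+1} − (1/(p+1))·[e_p e_pᵀ, −(1/β)e_p; β e_pᵀ, p]`. -/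
def M0 (p : ℕ) (β : ℝ) : Matrix (Fin p ⊕ Unit) (Fin p ⊕ Unit) ℝ :=
  1 - (1 / (p + 1 : ℝ)) •
    Matrix.fromBlocks (Matrix.of fun _ _ => (1 : ℝ))
      (Matrix.of fun _ _ => -(1 / β))
      (Matrix.of fun _ _ => (β : ℝ))
      (Matrix.of fun _ _ => (p : ℝ))

/-- `H₀ = [β(I_p + e_p e_pᵀ), 0; 0, (p+1)/β]`. -/
def H0 (p : ℕ) (β : ℝ) : Matrix (Fin p ⊕ Unit) (Fin p ⊕ Unit) ℝ :=
  Matrix.fromBlocks (β • ((1 : Matrix (Fin p) (Fin p) ℝ) + Matrix.of fun _ _ => (1 : ℝ))) 0 0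
    (Matrix.of fun _ _ => (p + 1 : ℝ) / β)

/-- `𝒬 = Q₀ ⊗ I_m`. -/
def calQ (p m : ℕ) (β : ℝ) : Matrix ((Fin p ⊕ Unit) × Fin m) ((Fin p ⊕ Unit) × Fin m) ℝ :=
  Q0 p β ⊗ₖ (1 : Matrix (Fin m) (Fin m) ℝ)

/-- `𝒟 = D₀ ⊗ I_m`. -/
def calD (p m : ℕ) (β : ℝ) : Matrix ((Fin p ⊕ Unit) × Fin m) ((Fin p ⊕ Unit) × Fin m) ℝ :=
  D0 p β ⊗ₖ (1 : Matrix (Fin m) (Fin m) ℝ)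

/-- `ℳ = M₀ ⊗ I_m`. -/
def calM (p m : ℕ) (β : ℝ) : Matrix ((Fin p ⊕ Unit) × Fin m) ((Fin p ⊕ Unit) × Fin m) ℝ :=
  M0 p β ⊗ₖ (1 : Matrix (Fin m) (Fin m) ℝ)

/-- `ℋ = H₀ ⊗ I_m`. -/
def calH (p m : ℕ) (β : ℝ) : Matrix ((Fin p ⊕ Unit) × Fin m) ((Fin p ⊕ Unit) × Fin m) ℝ :=
  H0 p β ⊗ₖ (1 : Matrix (Fin m) (Fin m) ℝ)

/-- `‖v‖²_G = vᵀ G v`. -/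
def nsq {p m : ℕ} (G : Matrix ((Fin p ⊕ Unit) × Fin m) ((Fin p ⊕ Unit) × Fin m) ℝ)
    (v : (Fin p ⊕ Unit) × Fin m → ℝ) : ℝ :=
  v ⬝ᵥ G.mulVec v

/-- `θ(x) = Σ_i θ_i(x_i)`. -/
def thetaSum {p : ℕ} {n : Fin p → ℕ} (θ : (i : Fin p) → (Fin (n i) → ℝ) → ℝ)
    (x : (i : Fin p) → Fin (n i) → ℝ) : ℝ :=
  ∑ i, θ i (x i)

/-- The Euclidean inner product on `ℝ^{n_1}×⋯×ℝ^{n_p}×ℝ^m`. -/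
def dotW {p m : ℕ} {n : Fin p → ℕ}
    (w w' : ((i : Fin p) → Fin (n i) → ℝ) × (Fin m → ℝ)) : ℝ :=
  (∑ i, w.1 i ⬝ᵥ w'.1 i) + w.2 ⬝ᵥ w'.2

/-- `F(w) = (−A_1ᵀλ, …, −A_pᵀλ, Σ_i A_i x_i − b)`. -/
def Fop {p m : ℕ} {n : Fin p → ℕ} (A : (i : Fin p) → Matrix (Fin m) (Fin (n i)) ℝ)
    (b : Fin m → ℝ) (w : ((i : Fin p) → Fin (n i) → ℝ) × (Fin m → ℝ)) :
    ((i : Fin p) → Fin (n i) → ℝ) × (Fin m → ℝ) :=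
  (fun i => -((A i)ᵀ.mulVec w.2), (∑ i, (A i).mulVec (w.1 i)) - b)

/-- `Pw = (A_1 x_1, …, A_p x_p, λ) ∈ ℝ^{(p+1)m}`. -/
def Pmap {p m : ℕ} {n : Fin p → ℕ} (A : (i : Fin p) → Matrix (Fin m) (Fin (n i)) ℝ)
    (w : ((i : Fin p) → Fin (n i) → ℝ) × (Fin m → ℝ)) :
    (Fin p ⊕ Unit) × Fin m → ℝ :=
  fun q => Sum.elim (fun i => (A i).mulVec (w.1 i) q.2) (fun _ => w.2 q.2) q.1

/-- `Ω = 𝒳_1 × ⋯ × 𝒳_p × ℝ^m`. -/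
def OmegaSet {p : ℕ} (m : ℕ) {n : Fin p → ℕ} (X : (i : Fin p) → Set (Fin (n i) → ℝ)) :
    Set (((i : Fin p) → Fin (n i) → ℝ) × (Fin m → ℝ)) :=
  {w | ∀ i, w.1 i ∈ X i}

/-- The solution set `Ω*` of the variational inequality VI(Ω,F,θ). -/
def VIsol {p m : ℕ} {n : Fin p → ℕ} (θ : (i : Fin p) → (Fin (n i) → ℝ) → ℝ)
    (X : (i : Fin p) → Set (Fin (n i) → ℝ))
    (A : (i : Fin p) → Matrix (Fin m) (Fin (n i)) ℝ) (b : Fin m → ℝ) :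
    Set (((i : Fin p) → Fin (n i) → ℝ) × (Fin m → ℝ)) :=
  {ws | ws ∈ OmegaSet m X ∧ ∀ w ∈ OmegaSet m X,
    thetaSum θ w.1 - thetaSum θ ws.1 + dotW (w - ws) (Fop A b ws) ≥ 0}

/-- The `λ`-component of `ξ = (u_1, …, u_p, λ)`. -/
def lamOf {p m : ℕ} (ξ : (Fin p ⊕ Unit) × Fin m → ℝ) : Fin m → ℝ :=
  fun j => ξ (Sum.inr (), j)

/-- The `u_i`-component of `ξ = (u_1, …, u_p, λ)`. -/
def uOf {p m : ℕ} (ξ : (Fin p ⊕ Unit) × Fin m → ℝ) (i : Fin p) : Fin m → ℝ :=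
  fun j => ξ (Sum.inl i, j)

/-- The parallel splitting ALM step: with input `ξ = (u_1, …, u_p, λ)` it produces
`w̃ = (x̃_1, …, x̃_p, λ̃)` where each `x̃_i ∈ 𝒳_i` minimizes
`x_i ↦ θ_i(x_i) − λᵀ A_i x_i + (β/2)‖A_i x_i − u_i‖²` over `𝒳_i`, and
`λ̃ = λ − β(Σ_i u_i − b)`. -/
def ALMStep {p m : ℕ} {n : Fin p → ℕ} (β : ℝ) (θ : (i : Fin p) → (Fin (n i) → ℝ) → ℝ)
    (X : (i : Fin p) → Set (Fin (n i) → ℝ))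
    (A : (i : Fin p) → Matrix (Fin m) (Fin (n i)) ℝ) (b : Fin m → ℝ)
    (ξ : (Fin p ⊕ Unit) × Fin m → ℝ)
    (wt : ((i : Fin p) → Fin (n i) → ℝ) × (Fin m → ℝ)) : Prop :=
  (∀ i, wt.1 i ∈ X i ∧ ∀ y ∈ X i,
      θ i (wt.1 i) - lamOf ξ ⬝ᵥ (A i).mulVec (wt.1 i) +
          β / 2 * (((A i).mulVec (wt.1 i) - uOf ξ i) ⬝ᵥ ((A i).mulVec (wt.1 i) - uOf ξ i)) ≤
        θ i y - lamOf ξ ⬝ᵥ (A i).mulVec y +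
          β / 2 * (((A i).mulVec y - uOf ξ i) ⬝ᵥ ((A i).mulVec y - uOf ξ i))) ∧
  wt.2 = lamOf ξ - β • ((∑ i, uOf ξ i) - b)

variable {p : ℕ} {β : ℝ}

lemma sum_ite_add {c e : ℝ} {i : Fin p} :
    ∑ x : Fin p, (c + (if i = x then β else 0) * e) = p * c + β * e := by
  rw [Finset.sum_add_distrib]
  simp [ite_mul, Finset.sum_ite_eq, Finset.sum_const, Finset.card_univ, mul_comm]

lemma H0_mul_M0 (hβ : β ≠ 0) : H0 p β * M0 p β = Q0 p β := by
  have h1 : (1 : ℝ) + p ≠ 0 := by positivity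
  have h2 : (p : ℝ) + 1 ≠ 0 := by positivity
  ext q r
  rcases q with i | u <;> rcases r with i' | u' <;>
    simp only [H0, M0, Q0, Matrix.mul_apply, Fintype.sum_sum_type, Matrix.one_apply,
      Matrix.fromBlocks_apply₁₁, Matrix.fromBlocks_apply₁₂, Matrix.fromBlocks_apply₂₁,
      Matrix.fromBlocks_apply₂₂, Matrix.sub_apply, Matrix.smul_apply, Matrix.add_apply,
      Matrix.of_apply, Matrix.zero_apply, smul_eq_mul, Finset.univ_unique, Finset.sum_const,
      Finset.card_singleton, one_smul, PUnit.default_eq_unit]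
  all_goals
    simp [Sum.inl.injEq, add_mul, mul_add, sub_mul, mul_sub, ite_mul, mul_ite,
      Finset.sum_add_distrib, Finset.sum_sub_distrib, Finset.sum_ite_eq, Finset.sum_ite_eq',
      Finset.sum_const, Finset.card_univ]
  all_goals field_simp
  all_goals try split
  all_goals first | rfl | ring | (field_simp <;> ring)

lemma M0T_mul_Q0 (hβ : β ≠ 0) : (M0 p β)ᵀ * Q0 p β = D0 p β := by
  have h1 : (1 : ℝ) + p ≠ 0 := by positivity
  have h2 : (p : ℝ) + 1 ≠ 0 := by positivity
  ext q r
  rcases q with i | u <;> rcases r with i' | u' <;>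
    simp only [M0, Q0, D0, Matrix.mul_apply, Matrix.transpose_apply, Fintype.sum_sum_type,
      Matrix.one_apply, Matrix.fromBlocks_apply₁₁, Matrix.fromBlocks_apply₁₂,
      Matrix.fromBlocks_apply₂₁, Matrix.fromBlocks_apply₂₂, Matrix.sub_apply,
      Matrix.smul_apply, Matrix.add_apply, Matrix.of_apply, Matrix.zero_apply, smul_eq_mul,
      Finset.univ_unique, Finset.sum_const, Finset.card_singleton, one_smul,
      PUnit.default_eq_unit]
  all_goals
    simp [Sum.inl.injEq, add_mul, mul_add, sub_mul, mul_sub, ite_mul, mul_ite,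
      Finset.sum_add_distrib, Finset.sum_sub_distrib, Finset.sum_ite_eq, Finset.sum_ite_eq',
      Finset.sum_const, Finset.card_univ, eq_comm]
  all_goals field_simp
  all_goals try split
  all_goals first | rfl | ring | (field_simp <;> ring)

lemma Q0_add_transpose : Q0 p β + (Q0 p β)ᵀ = D0 p β + D0 p β := by
  ext q r
  rcases q with i | u <;> rcases r with i' | u' <;>
    simp [Q0, D0, Matrix.transpose_apply, Matrix.one_apply, eq_comm] <;>
    try split <;> ring

lemma H0_transpose : (H0 p β)ᵀ = H0 p β := by
  ext q r
  rcases q with i | u <;> rcases r with i' | u' <;>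
    simp [H0, Matrix.transpose_apply, Matrix.one_apply, eq_comm] <;>
    try split <;> ring

lemma D0_transpose : (D0 p β)ᵀ = D0 p β := by
  ext q r
  rcases q with i | u <;> rcases r with i' | u' <;>
    simp [D0, Matrix.transpose_apply, Matrix.one_apply, eq_comm] <;>
    try split <;> ring

variable {m : ℕ}

lemma kron_one_mul {A B : Matrix (Fin p ⊕ Unit) (Fin p ⊕ Unit) ℝ} :
    (A ⊗ₖ (1 : Matrix (Fin m) (Fin m) ℝ)) * (B ⊗ₖ (1 : Matrix (Fin m) (Fin m) ℝ))
      = (A * B) ⊗ₖ (1 : Matrix (Fin m) (Fin m) ℝ) := by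
  have h := Matrix.mul_kronecker_mul A B (1 : Matrix (Fin m) (Fin m) ℝ)
    (1 : Matrix (Fin m) (Fin m) ℝ)
  rw [Matrix.one_mul] at h
  exact h.symm

lemma calH_mul_calM (hβ : β ≠ 0) : calH p m β * calM p m β = calQ p m β := by
  rw [calH, calM, calQ, kron_one_mul, H0_mul_M0 hβ]

lemma calM_T_mul_calQ (hβ : β ≠ 0) : (calM p m β)ᵀ * calQ p m β = calD p m β := by
  rw [calM, calQ, calD, ← Matrix.kroneckerMap_transpose, Matrix.transpose_one, kron_one_mul,
    M0T_mul_Q0 hβ]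

lemma calQ_add_T : calQ p m β + (calQ p m β)ᵀ = calD p m β + calD p m β := by
  rw [calQ, calD, ← Matrix.kroneckerMap_transpose, Matrix.transpose_one]
  rw [show Q0 p β ⊗ₖ (1 : Matrix (Fin m) (Fin m) ℝ) + (Q0 p β)ᵀ ⊗ₖ (1 : Matrix (Fin m) (Fin m) ℝ)
      = (Q0 p β + (Q0 p β)ᵀ) ⊗ₖ (1 : Matrix (Fin m) (Fin m) ℝ) from
    (Matrix.add_kronecker _ _ _).symm, Q0_add_transpose,
    Matrix.add_kronecker]

lemma calH_T : (calH p m β)ᵀ = calH p m β := by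
  rw [calH, ← Matrix.kroneckerMap_transpose, Matrix.transpose_one, H0_transpose]

-- generic symmetric dot lemma

lemma dot_symm {N : Type*} [Fintype N] [DecidableEq N] (G : Matrix N N ℝ) (hG : Gᵀ = G)
    (a b : N → ℝ) : a ⬝ᵥ G.mulVec b = b ⬝ᵥ G.mulVec a := by
  rw [Matrix.dotProduct_mulVec, ← Matrix.mulVec_transpose, hG, dotProduct_comm]

lemma dot_MQ (hβ : β ≠ 0) (a b : (Fin p ⊕ Unit) × Fin m → ℝ) :
    ((calM p m β).mulVec a) ⬝ᵥ (calQ p m β).mulVec b = a ⬝ᵥ (calD p m β).mulVec b := by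
  rw [Matrix.dotProduct_mulVec, ← Matrix.vecMul_transpose, Matrix.vecMul_vecMul,
    calM_T_mul_calQ hβ, ← Matrix.dotProduct_mulVec]

lemma dot_QQ (a : (Fin p ⊕ Unit) × Fin m → ℝ) :
    a ⬝ᵥ (calQ p m β).mulVec a = a ⬝ᵥ (calD p m β).mulVec a := by
  have h1 : a ⬝ᵥ ((calQ p m β + (calQ p m β)ᵀ).mulVec a)
      = a ⬝ᵥ ((calD p m β + calD p m β).mulVec a) := by rw [calQ_add_T]
  have h2 : a ⬝ᵥ ((calQ p m β)ᵀ).mulVec a = a ⬝ᵥ (calQ p m β).mulVec a := by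
    rw [Matrix.mulVec_transpose, dotProduct_comm, ← Matrix.dotProduct_mulVec]
  simp only [Matrix.add_mulVec, dotProduct_add] at h1
  linarith

lemma kron_one_mulVec (B : Matrix (Fin p ⊕ Unit) (Fin p ⊕ Unit) ℝ)
    (v : (Fin p ⊕ Unit) × Fin m → ℝ) (q : (Fin p ⊕ Unit) × Fin m) :
    (B ⊗ₖ (1 : Matrix (Fin m) (Fin m) ℝ)).mulVec v q = ∑ r, B q.1 r * v (r, q.2) := by
  simp [Matrix.mulVec, dotProduct, Fintype.sum_prod_type, Matrix.kroneckerMap_apply,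
    Matrix.one_apply, mul_ite, Finset.sum_ite_eq, Finset.mul_sum]

lemma calQ_apply_inl (v : (Fin p ⊕ Unit) × Fin m → ℝ) (i : Fin p) (j : Fin m) :
    (calQ p m β).mulVec v (Sum.inl i, j) = β * v (Sum.inl i, j) + v (Sum.inr (), j) := by
  rw [calQ, kron_one_mulVec]
  simp [Q0, Fintype.sum_sum_type, Matrix.one_apply, Finset.sum_ite_eq, mul_ite, ite_mul]

lemma calQ_apply_inr (v : (Fin p ⊕ Unit) × Fin m → ℝ) (j : Fin m) :
    (calQ p m β).mulVec v (Sum.inr (), j)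
      = (1 / β) * v (Sum.inr (), j) - ∑ i, v (Sum.inl i, j) := by
  rw [calQ, kron_one_mulVec]
  simp [Q0, Fintype.sum_sum_type, Matrix.one_apply, Finset.sum_ite_eq, mul_ite, ite_mul,
    sub_eq_neg_add, Finset.sum_neg_distrib]

lemma calD_apply_inl (v : (Fin p ⊕ Unit) × Fin m → ℝ) (i : Fin p) (j : Fin m) :
    (calD p m β).mulVec v (Sum.inl i, j) = β * v (Sum.inl i, j) := by
  rw [calD, kron_one_mulVec]
  simp [D0, Fintype.sum_sum_type, Matrix.one_apply, Finset.sum_ite_eq, mul_ite, ite_mul]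

lemma calD_apply_inr (v : (Fin p ⊕ Unit) × Fin m → ℝ) (j : Fin m) :
    (calD p m β).mulVec v (Sum.inr (), j) = (1 / β) * v (Sum.inr (), j) := by
  rw [calD, kron_one_mulVec]
  simp [D0, Fintype.sum_sum_type, Matrix.one_apply, Finset.sum_ite_eq, mul_ite, ite_mul]

lemma calH_apply_inl (v : (Fin p ⊕ Unit) × Fin m → ℝ) (i : Fin p) (j : Fin m) :
    (calH p m β).mulVec v (Sum.inl i, j)
      = β * v (Sum.inl i, j) + β * ∑ i', v (Sum.inl i', j) := by
  rw [calH, kron_one_mulVec]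
  simp [H0, Fintype.sum_sum_type, Matrix.one_apply, Finset.sum_ite_eq, mul_ite, ite_mul,
    add_mul, mul_add, Finset.sum_add_distrib, Finset.mul_sum]

lemma calH_apply_inr (v : (Fin p ⊕ Unit) × Fin m → ℝ) (j : Fin m) :
    (calH p m β).mulVec v (Sum.inr (), j) = ((p + 1 : ℝ) / β) * v (Sum.inr (), j) := by
  rw [calH, kron_one_mulVec]
  simp [H0, Fintype.sum_sum_type, Matrix.one_apply, Finset.sum_ite_eq, mul_ite, ite_mul]

lemma dot_split (a b : (Fin p ⊕ Unit) × Fin m → ℝ) :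
    a ⬝ᵥ b = (∑ i, uOf a i ⬝ᵥ uOf b i) + lamOf a ⬝ᵥ lamOf b := by
  simp [dotProduct, uOf, lamOf, Fintype.sum_prod_type, Fintype.sum_sum_type]

lemma quadD (v : (Fin p ⊕ Unit) × Fin m → ℝ) :
    v ⬝ᵥ (calD p m β).mulVec v
      = β * (∑ i, uOf v i ⬝ᵥ uOf v i) + (1 / β) * (lamOf v ⬝ᵥ lamOf v) := by
  rw [dot_split]
  congr 1
  · rw [Finset.mul_sum]
    refine Finset.sum_congr rfl fun i _ => ?_
    simp [uOf, dotProduct, calD_apply_inl, Finset.mul_sum]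
    exact Finset.sum_congr rfl fun j _ => by ring
  · simp [lamOf, dotProduct, calD_apply_inr, Finset.mul_sum]
    exact Finset.sum_congr rfl fun j _ => by ring

lemma sum_dotProduct' {ι : Type*} (s : Finset ι) (f : ι → Fin m → ℝ) (w : Fin m → ℝ) :
    (∑ i ∈ s, f i) ⬝ᵥ w = ∑ i ∈ s, f i ⬝ᵥ w := by
  simp only [dotProduct, Finset.sum_apply, Finset.sum_mul]
  exact Finset.sum_comm

lemma dotProduct_sum' {ι : Type*} (s : Finset ι) (w : Fin m → ℝ) (f : ι → Fin m → ℝ) :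
    w ⬝ᵥ (∑ i ∈ s, f i) = ∑ i ∈ s, w ⬝ᵥ f i := by
  simp only [dotProduct, Finset.sum_apply, Finset.mul_sum]
  exact Finset.sum_comm

lemma quadH (v : (Fin p ⊕ Unit) × Fin m → ℝ) :
    v ⬝ᵥ (calH p m β).mulVec v
      = β * (∑ i, uOf v i ⬝ᵥ uOf v i) + β * ((∑ i, uOf v i) ⬝ᵥ (∑ i, uOf v i))
        + ((p + 1 : ℝ) / β) * (lamOf v ⬝ᵥ lamOf v) := by
  have h2 : lamOf ((calH p m β).mulVec v) = ((p + 1 : ℝ) / β) • lamOf v := by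
    funext j; simp [lamOf, calH_apply_inr]
  have e1 : ∀ i : Fin p, uOf v i ⬝ᵥ uOf ((calH p m β).mulVec v) i
      = β • (uOf v i ⬝ᵥ uOf v i) + β • (uOf v i ⬝ᵥ (∑ i', uOf v i')) := by
    intro i
    have : uOf ((calH p m β).mulVec v) i = β • uOf v i + β • (∑ i', uOf v i') := by
      funext j
      simp [uOf, calH_apply_inl, Finset.sum_apply, Finset.mul_sum]
    rw [this, dotProduct_add, dotProduct_smul, dotProduct_smul]
  rw [dot_split, h2, dotProduct_smul]
  simp only [e1, Finset.sum_add_distrib, smul_eq_mul]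
  rw [← Finset.mul_sum, ← Finset.mul_sum]
  have hS : (∑ i, uOf v i ⬝ᵥ (∑ i', uOf v i')) = (∑ i', uOf v i') ⬝ᵥ (∑ i', uOf v i') := by
    rw [← sum_dotProduct' Finset.univ (fun i => uOf v i) (∑ i', uOf v i')]
  rw [hS]

lemma dot_self_nonneg' (w : Fin m → ℝ) : 0 ≤ w ⬝ᵥ w :=
  Finset.sum_nonneg fun _ _ => mul_self_nonneg _

lemma quadD_lower (hβ : 0 < β) (v : (Fin p ⊕ Unit) × Fin m → ℝ) :
    min β (1 / β) * (v ⬝ᵥ v) ≤ v ⬝ᵥ (calD p m β).mulVec v := by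
  rw [quadD, dot_split v v]
  have hX : (0:ℝ) ≤ ∑ i, uOf v i ⬝ᵥ uOf v i :=
    Finset.sum_nonneg fun i _ => dot_self_nonneg' _
  have hY : (0:ℝ) ≤ lamOf v ⬝ᵥ lamOf v := dot_self_nonneg' _
  have h1 : min β (1/β) ≤ β := min_le_left _ _
  have h2 : min β (1/β) ≤ 1/β := min_le_right _ _
  nlinarith

lemma quadD_nonneg (hβ : 0 < β) (v : (Fin p ⊕ Unit) × Fin m → ℝ) :
    0 ≤ v ⬝ᵥ (calD p m β).mulVec v := by
  have := quadD_lower (p := p) (m := m) hβ v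
  have h0 : 0 < min β (1/β) := lt_min hβ (by positivity)
  have hvv : (0:ℝ) ≤ v ⬝ᵥ v := Finset.sum_nonneg fun _ _ => mul_self_nonneg _
  nlinarith

lemma quadH_lower (hβ : 0 < β) (v : (Fin p ⊕ Unit) × Fin m → ℝ) :
    min β (1 / β) * (v ⬝ᵥ v) ≤ v ⬝ᵥ (calH p m β).mulVec v := by
  rw [quadH, dot_split v v]
  have hX : (0:ℝ) ≤ ∑ i, uOf v i ⬝ᵥ uOf v i :=
    Finset.sum_nonneg fun i _ => dot_self_nonneg' _
  have hY : (0:ℝ) ≤ lamOf v ⬝ᵥ lamOf v := dot_self_nonneg' _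
  have hS : (0:ℝ) ≤ (∑ i, uOf v i) ⬝ᵥ (∑ i, uOf v i) := dot_self_nonneg' _
  have h1 : min β (1/β) ≤ β := min_le_left _ _
  have h2 : min β (1/β) ≤ 1/β := min_le_right _ _
  have h3 : (1:ℝ)/β ≤ ((p:ℝ)+1)/β := by
    gcongr
    linarith [Nat.cast_nonneg (α := ℝ) p]
  nlinarith

lemma nsq_step (hβ : β ≠ 0) (x d : (Fin p ⊕ Unit) × Fin m → ℝ) (α : ℝ) :
    nsq (calH p m β) (x - α • (calM p m β).mulVec d)
      = nsq (calH p m β) x - 2 * α * (x ⬝ᵥ (calQ p m β).mulVec d)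
        + α ^ 2 * (d ⬝ᵥ (calD p m β).mulVec d) := by
  unfold nsq
  set y := α • (calM p m β).mulVec d with hy
  have hHy : (calH p m β).mulVec y = α • (calQ p m β).mulVec d := by
    rw [hy, Matrix.mulVec_smul, Matrix.mulVec_mulVec, calH_mul_calM hβ]
  have hsym : y ⬝ᵥ (calH p m β).mulVec x = x ⬝ᵥ (calH p m β).mulVec y :=
    dot_symm _ calH_T y x
  have hyy : y ⬝ᵥ (calH p m β).mulVec y = α ^ 2 * (d ⬝ᵥ (calD p m β).mulVec d) := by
    rw [hHy, hy, smul_dotProduct, dotProduct_smul, smul_eq_mul, smul_eq_mul,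
      dot_MQ hβ]
    ring
  rw [Matrix.mulVec_sub, sub_dotProduct, dotProduct_sub, dotProduct_sub, hsym, hyy,
    hHy, dotProduct_smul, smul_eq_mul]
  ring

section OptLin

variable {m nn : ℕ} {β : ℝ}

/-- First-order optimality: linearization of the ALM subproblem. -/

lemma opt_lin (hβ : 0 < β) (θi : (Fin nn → ℝ) → ℝ) (hθ : ConvexOn ℝ Set.univ θi)
    {Xi : Set (Fin nn → ℝ)} (hX : Convex ℝ Xi) (A : Matrix (Fin m) (Fin nn) ℝ)
    (lam u : Fin m → ℝ) {xt : Fin nn → ℝ} (hmem : xt ∈ Xi)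
    (hopt : ∀ y ∈ Xi, θi xt - lam ⬝ᵥ A.mulVec xt +
        β / 2 * ((A.mulVec xt - u) ⬝ᵥ (A.mulVec xt - u)) ≤
      θi y - lam ⬝ᵥ A.mulVec y + β / 2 * ((A.mulVec y - u) ⬝ᵥ (A.mulVec y - u)))
    {y : Fin nn → ℝ} (hy : y ∈ Xi) :
    0 ≤ θi y - θi xt + (A.mulVec y - A.mulVec xt) ⬝ᵥ (β • (A.mulVec xt - u) - lam) := by
  set d : Fin m → ℝ := A.mulVec y - A.mulVec xt with hd
  set v : Fin m → ℝ := A.mulVec xt - u with hv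
  set E : ℝ := θi y - θi xt + d ⬝ᵥ (β • v - lam) with hE
  set C : ℝ := d ⬝ᵥ d with hC
  have hC0 : 0 ≤ C := dot_self_nonneg' d
  have key : ∀ t : ℝ, 0 < t → t ≤ 1 → 0 ≤ E + t * (β / 2 * C) := by
    intro t ht ht1
    have hz : (1 - t) • xt + t • y ∈ Xi := hX hmem hy (by linarith) ht.le (by ring)
    have hth : θi ((1 - t) • xt + t • y) ≤ (1 - t) * θi xt + t * θi y :=
      hθ.2 (Set.mem_univ xt) (Set.mem_univ y) (by linarith) ht.le (by ring)
    have hzxt : (1 - t) • xt + t • y = xt + t • (y - xt) := by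
      funext j; simp [smul_eq_mul]; ring
    have hAz : A.mulVec ((1 - t) • xt + t • y) = A.mulVec xt + t • d := by
      rw [hzxt, Matrix.mulVec_add, Matrix.mulVec_smul, Matrix.mulVec_sub, hd]
    have hle := hopt _ hz
    rw [hAz] at hle
    -- expand the dot products
    have e1 : lam ⬝ᵥ (A.mulVec xt + t • d) = lam ⬝ᵥ A.mulVec xt + t * (lam ⬝ᵥ d) := by
      rw [dotProduct_add, dotProduct_smul, smul_eq_mul]
    have e2 : (A.mulVec xt + t • d - u) ⬝ᵥ (A.mulVec xt + t • d - u)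
        = v ⬝ᵥ v + 2 * t * (v ⬝ᵥ d) + t ^ 2 * C := by
      have : A.mulVec xt + t • d - u = v + t • d := by rw [hv]; funext j; simp; ring
      rw [this, dotProduct_add, add_dotProduct, add_dotProduct, dotProduct_smul,
        smul_dotProduct, dotProduct_smul, smul_eq_mul, smul_eq_mul, smul_eq_mul, hC,
        dotProduct_comm d v]
      simp [smul_dotProduct, dotProduct_smul, smul_eq_mul]
      ring
    rw [e1, e2] at hle
    have hEe : E = θi y - θi xt - lam ⬝ᵥ d + β * (v ⬝ᵥ d) := by
      rw [hE, dotProduct_sub, dotProduct_smul, smul_eq_mul, dotProduct_comm d v,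
        dotProduct_comm d lam]
      ring
    nlinarith [hle, hth]
  by_contra h
  push_neg at h
  have hEneg : 0 < -E := by linarith
  set t : ℝ := min 1 (-E / (β / 2 * C + 1)) with htdef
  have hden : 0 < β / 2 * C + 1 := by positivity
  have ht0 : 0 < t := lt_min one_pos (by positivity)
  have ht1 : t ≤ 1 := min_le_left _ _
  have ht2 : t ≤ -E / (β / 2 * C + 1) := min_le_right _ _
  have := key t ht0 ht1
  have hlt : t * (β / 2 * C) < -E := by
    have h1 : t * (β / 2 * C + 1) ≤ -E := by
      rw [← div_mul_cancel₀ (-E) (ne_of_gt hden)]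
      exact mul_le_mul_of_nonneg_right ht2 hden.le
    nlinarith
  linarith

end OptLin

section KeyLemma

variable {p m : ℕ} {n : Fin p → ℕ} {β : ℝ}

variable {θ : (i : Fin p) → (Fin (n i) → ℝ) → ℝ}

variable {X : (i : Fin p) → Set (Fin (n i) → ℝ)}

variable {A : (i : Fin p) → Matrix (Fin m) (Fin (n i)) ℝ} {b : Fin m → ℝ}

lemma dot_transpose {k : ℕ} (B : Matrix (Fin m) (Fin k) ℝ) (x : Fin k → ℝ) (lam : Fin m → ℝ) :
    x ⬝ᵥ Bᵀ.mulVec lam = (B.mulVec x) ⬝ᵥ lam := by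
  rw [Matrix.mulVec_transpose, dotProduct_comm, ← Matrix.dotProduct_mulVec, dotProduct_comm]

lemma dotW_Fop (u w : ((i : Fin p) → Fin (n i) → ℝ) × (Fin m → ℝ)) :
    dotW u (Fop A b w) = u.2 ⬝ᵥ (∑ i, (A i).mulVec (w.1 i))
      - (∑ i, ((A i).mulVec (u.1 i)) ⬝ᵥ w.2) - u.2 ⬝ᵥ b := by
  simp only [dotW, Fop, dotProduct_neg, dot_transpose, dotProduct_sub,
    Finset.sum_neg_distrib]
  ring

lemma skew (wt ws : ((i : Fin p) → Fin (n i) → ℝ) × (Fin m → ℝ)) :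
    dotW (wt - ws) (Fop A b wt) = dotW (wt - ws) (Fop A b ws) := by
  rw [dotW_Fop, dotW_Fop]
  have h1 : (wt - ws).2 = wt.2 - ws.2 := rfl
  have h2 : ∀ i, (wt - ws).1 i = wt.1 i - ws.1 i := fun _ => rfl
  simp only [h1, h2, Matrix.mulVec_sub, sub_dotProduct, dotProduct_sub,
    Finset.sum_sub_distrib]
  have s1 := sum_dotProduct' Finset.univ (fun i => (A i).mulVec (wt.1 i)) wt.2
  have s2 := sum_dotProduct' Finset.univ (fun i => (A i).mulVec (wt.1 i)) ws.2
  have s3 := sum_dotProduct' Finset.univ (fun i => (A i).mulVec (ws.1 i)) wt.2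
  have s4 := sum_dotProduct' Finset.univ (fun i => (A i).mulVec (ws.1 i)) ws.2
  have c1 := dotProduct_comm wt.2 (∑ i, (A i).mulVec (wt.1 i))
  have c2 := dotProduct_comm ws.2 (∑ i, (A i).mulVec (wt.1 i))
  have c3 := dotProduct_comm wt.2 (∑ i, (A i).mulVec (ws.1 i))
  have c4 := dotProduct_comm ws.2 (∑ i, (A i).mulVec (ws.1 i))
  linarith

lemma key_ineq (hβ : 0 < β) (hθ : ∀ i, ConvexOn ℝ Set.univ (θ i))
    (hX : ∀ i, Convex ℝ (X i))
    {ξ : (Fin p ⊕ Unit) × Fin m → ℝ}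
    {wt : ((i : Fin p) → Fin (n i) → ℝ) × (Fin m → ℝ)}
    (hstep : ALMStep β θ X A b ξ wt)
    {w : ((i : Fin p) → Fin (n i) → ℝ) × (Fin m → ℝ)} (hw : w ∈ OmegaSet m X) :
    (Pmap A w - Pmap A wt) ⬝ᵥ (calQ p m β).mulVec (ξ - Pmap A wt)
      ≤ thetaSum θ w.1 - thetaSum θ wt.1 + dotW (w - wt) (Fop A b wt) := by
  set d := ξ - Pmap A wt with hd
  have hud : ∀ i, uOf d i = uOf ξ i - (A i).mulVec (wt.1 i) := fun _ => rfl
  have hld : lamOf d = lamOf ξ - wt.2 := rfl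
  have hld2 : lamOf d = β • ((∑ i, uOf ξ i) - b) := by
    rw [hld, hstep.2]; funext j; simp
  -- the lambda row of Q *ᵥ d
  have hlamrow : lamOf ((calQ p m β).mulVec d) = (∑ i, (A i).mulVec (wt.1 i)) - b := by
    funext j
    have : lamOf ((calQ p m β).mulVec d) j = (1/β) * d (Sum.inr (), j) - ∑ i, d (Sum.inl i, j) :=
      calQ_apply_inr d j
    rw [this]
    have hdj : d (Sum.inr (), j) = β * ((∑ i, uOf ξ i) j - b j) := by
      have := congrFun hld2 j
      simpa [lamOf] using this
    have hdij : ∀ i, d (Sum.inl i, j) = uOf ξ i j - (A i).mulVec (wt.1 i) j := by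
      intro i; exact congrFun (hud i) j
    simp only [hdj, hdij, Finset.sum_apply, Finset.sum_sub_distrib, Pi.sub_apply]
    field_simp
    try ring
  -- the u rows of Q *ᵥ d
  have hurow : ∀ i, uOf ((calQ p m β).mulVec d) i = β • uOf d i + lamOf d := by
    intro i; funext j
    have := calQ_apply_inl (β := β) d i j
    simpa [uOf, lamOf] using this
  -- split the LHS
  rw [dot_split]
  have hPu : ∀ i, uOf (Pmap A w - Pmap A wt) i = (A i).mulVec (w.1 i) - (A i).mulVec (wt.1 i) :=
    fun _ => rfl
  have hPl : lamOf (Pmap A w - Pmap A wt) = w.2 - wt.2 := rfl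
  rw [hPl, hlamrow]
  -- expand the RHS
  have hth : thetaSum θ w.1 - thetaSum θ wt.1 = ∑ i, (θ i (w.1 i) - θ i (wt.1 i)) := by
    rw [thetaSum, thetaSum, ← Finset.sum_sub_distrib]
  have hdw : dotW (w - wt) (Fop A b wt)
      = (∑ i, (w.1 i - wt.1 i) ⬝ᵥ (-(((A i)ᵀ).mulVec wt.2)))
        + (w.2 - wt.2) ⬝ᵥ ((∑ i, (A i).mulVec (wt.1 i)) - b) := by
    rfl
  rw [hth, hdw]
  have main : ∀ i : Fin p, uOf (Pmap A w - Pmap A wt) i ⬝ᵥ uOf ((calQ p m β).mulVec d) i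
      ≤ (θ i (w.1 i) - θ i (wt.1 i)) + (w.1 i - wt.1 i) ⬝ᵥ (-(((A i)ᵀ).mulVec wt.2)) := by
    intro i
    have hopt := opt_lin (m := m) hβ (θ i) (hθ i) (hX i) (A i) (lamOf ξ) (uOf ξ i)
      (hstep.1 i).1 (hstep.1 i).2 (hw i)
    have e1 : (w.1 i - wt.1 i) ⬝ᵥ (-(((A i)ᵀ).mulVec wt.2))
        = -(((A i).mulVec (w.1 i) - (A i).mulVec (wt.1 i)) ⬝ᵥ wt.2) := by
      rw [dotProduct_neg, dot_transpose, Matrix.mulVec_sub]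
    have e2 : uOf (Pmap A w - Pmap A wt) i ⬝ᵥ uOf ((calQ p m β).mulVec d) i
        = ((A i).mulVec (w.1 i) - (A i).mulVec (wt.1 i)) ⬝ᵥ
            (β • (uOf ξ i - (A i).mulVec (wt.1 i)) + (lamOf ξ - wt.2)) := by
      rw [hPu, hurow, hud, hld]
    rw [e1, e2]
    have expand : ∀ z : Fin m → ℝ,
        ((A i).mulVec (w.1 i) - (A i).mulVec (wt.1 i)) ⬝ᵥ z
          = (fun y => ((A i).mulVec (w.1 i) - (A i).mulVec (wt.1 i)) ⬝ᵥ y) z := fun _ => rfl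
    -- rearrange using bilinearity
    have goal_eq : (θ i (w.1 i) - θ i (wt.1 i))
        + -(((A i).mulVec (w.1 i) - (A i).mulVec (wt.1 i)) ⬝ᵥ wt.2)
        - ((A i).mulVec (w.1 i) - (A i).mulVec (wt.1 i)) ⬝ᵥ
            (β • (uOf ξ i - (A i).mulVec (wt.1 i)) + (lamOf ξ - wt.2))
        = θ i (w.1 i) - θ i (wt.1 i)
          + ((A i).mulVec (w.1 i) - (A i).mulVec (wt.1 i)) ⬝ᵥ
              (β • ((A i).mulVec (wt.1 i) - uOf ξ i) - lamOf ξ) := by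
      simp only [dotProduct_add, dotProduct_sub, dotProduct_smul, smul_eq_mul]
      ring
    linarith [hopt, goal_eq.ge, goal_eq.le]
  calc (∑ i, uOf (Pmap A w - Pmap A wt) i ⬝ᵥ uOf ((calQ p m β).mulVec d) i)
        + (w.2 - wt.2) ⬝ᵥ ((∑ i, (A i).mulVec (wt.1 i)) - b)
      ≤ (∑ i, ((θ i (w.1 i) - θ i (wt.1 i)) + (w.1 i - wt.1 i) ⬝ᵥ (-(((A i)ᵀ).mulVec wt.2))))
        + (w.2 - wt.2) ⬝ᵥ ((∑ i, (A i).mulVec (wt.1 i)) - b) := by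
        have := Finset.sum_le_sum (fun i (_ : i ∈ Finset.univ) => main i)
        linarith
    _ = (∑ i, (θ i (w.1 i) - θ i (wt.1 i)))
        + ((∑ i, (w.1 i - wt.1 i) ⬝ᵥ (-(((A i)ᵀ).mulVec wt.2)))
          + (w.2 - wt.2) ⬝ᵥ ((∑ i, (A i).mulVec (wt.1 i)) - b)) := by
        rw [Finset.sum_add_distrib]; ring

end KeyLemma

section SolIneq

variable {p m : ℕ} {n : Fin p → ℕ} {β : ℝ}

variable {θ : (i : Fin p) → (Fin (n i) → ℝ) → ℝ}

variable {X : (i : Fin p) → Set (Fin (n i) → ℝ)}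

variable {A : (i : Fin p) → Matrix (Fin m) (Fin (n i)) ℝ} {b : Fin m → ℝ}

lemma dotW_sub_swap (a c d' : ((i : Fin p) → Fin (n i) → ℝ) × (Fin m → ℝ)) :
    dotW (a - c) d' = -dotW (c - a) d' := by
  have h1 : ∀ i, (a - c).1 i = a.1 i - c.1 i := fun _ => rfl
  have h2 : (a - c).2 = a.2 - c.2 := rfl
  have h3 : ∀ i, (c - a).1 i = c.1 i - a.1 i := fun _ => rfl
  have h4 : (c - a).2 = c.2 - a.2 := rfl
  simp only [dotW, h1, h2, h3, h4, sub_dotProduct, Finset.sum_sub_distrib]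
  ring

lemma sol_ineq (hβ : 0 < β) (hθ : ∀ i, ConvexOn ℝ Set.univ (θ i))
    (hX : ∀ i, Convex ℝ (X i))
    {ξ : (Fin p ⊕ Unit) × Fin m → ℝ}
    {wt : ((i : Fin p) → Fin (n i) → ℝ) × (Fin m → ℝ)}
    (hstep : ALMStep β θ X A b ξ wt)
    {ws : ((i : Fin p) → Fin (n i) → ℝ) × (Fin m → ℝ)} (hws : ws ∈ VIsol θ X A b) :
    (ξ - Pmap A wt) ⬝ᵥ (calD p m β).mulVec (ξ - Pmap A wt)
      ≤ (ξ - Pmap A ws) ⬝ᵥ (calQ p m β).mulVec (ξ - Pmap A wt) := by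
  set d := ξ - Pmap A wt with hd
  have hwtΩ : wt ∈ OmegaSet m X := fun i => (hstep.1 i).1
  have k := key_ineq hβ hθ hX hstep hws.1
  have vi := hws.2 wt hwtΩ
  have sk := skew (A := A) (b := b) wt ws
  have swap := dotW_sub_swap (n := n) (m := m) ws wt (Fop A b wt)
  have nonpos : (Pmap A ws - Pmap A wt) ⬝ᵥ (calQ p m β).mulVec d ≤ 0 := by
    have : thetaSum θ ws.1 - thetaSum θ wt.1 + dotW (ws - wt) (Fop A b wt) ≤ 0 := by
      rw [swap, sk] at *
      linarith [vi]
    linarith [k]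
  have split : ξ - Pmap A ws = d + (Pmap A wt - Pmap A ws) := by
    funext q; simp [hd]
  rw [split, add_dotProduct]
  have : (Pmap A wt - Pmap A ws) ⬝ᵥ (calQ p m β).mulVec d
      = -((Pmap A ws - Pmap A wt) ⬝ᵥ (calQ p m β).mulVec d) := by
    simp only [sub_dotProduct]; ring
  rw [this, dot_QQ (β := β) d]
  linarith

end SolIneq

section Analysis

open Filter Topology

variable {p m : ℕ} {β : ℝ}

lemma nsq_nonneg (hβ : 0 < β) (v : (Fin p ⊕ Unit) × Fin m → ℝ) :
    0 ≤ nsq (calH p m β) v := by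
  have h := quadH_lower (p := p) (m := m) hβ v
  have h0 : 0 < min β (1/β) := lt_min hβ (by positivity)
  have hv : 0 ≤ v ⬝ᵥ v := Finset.sum_nonneg fun _ _ => mul_self_nonneg _
  unfold nsq
  nlinarith

lemma sq_le_dot_self (v : (Fin p ⊕ Unit) × Fin m → ℝ) (q : (Fin p ⊕ Unit) × Fin m) :
    (v q) ^ 2 ≤ v ⬝ᵥ v := by
  have : v q * v q ≤ ∑ r, v r * v r :=
    Finset.single_le_sum (fun r _ => mul_self_nonneg (v r)) (Finset.mem_univ q)
  simpa [dotProduct, sq] using this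

lemma tendsto_of_dot_self {v : ℕ → (Fin p ⊕ Unit) × Fin m → ℝ}
    (h : Filter.Tendsto (fun k => v k ⬝ᵥ v k) Filter.atTop (nhds 0)) :
    Filter.Tendsto v Filter.atTop (nhds 0) := by
  rw [tendsto_pi_nhds]
  intro q
  have hsq : Filter.Tendsto (fun k => (v k q) ^ 2) Filter.atTop (nhds 0) :=
    squeeze_zero (fun k => sq_nonneg _) (fun k => sq_le_dot_self (v k) q) h
  have habs : Filter.Tendsto (fun k => |v k q|) Filter.atTop (nhds 0) := by
    have h1 := (Real.continuous_sqrt.tendsto 0).comp hsq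
    have h2 : (fun k => |v k q|) = (fun x => Real.sqrt x) ∘ fun k => (v k q) ^ 2 := by
      funext k; simp [Function.comp, Real.sqrt_sq_eq_abs]
    rw [h2]
    simpa using h1
  simpa using tendsto_zero_iff_abs_tendsto_zero _ |>.mpr habs

end Analysis

open Filter Topology

set_option maxHeartbeats 1000000 in
set_option synthInstance.maxHeartbeats 400000 in
/-- Global convergence: if `Ω*` is nonempty, each `A_i` has full column rank, `α ∈ (0,2)`,
and `{ξ^k}` is generated by the parallel splitting ALM step followed by the rank-two
relaxation step `ξ^{k+1} = ξ^k − αℳ(ξ^k − ξ̃^k)`, then `{ξ^k}` converges to some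
`ξ^∞ ∈ Ξ*`. -/
theorem stmt13 {p m : ℕ} {n : Fin p → ℕ} (hp : 1 ≤ p)
    (θ : (i : Fin p) → (Fin (n i) → ℝ) → ℝ) (hθ : ∀ i, ConvexOn ℝ Set.univ (θ i))
    (X : (i : Fin p) → Set (Fin (n i) → ℝ))
    (hXconv : ∀ i, Convex ℝ (X i)) (hXclosed : ∀ i, IsClosed (X i))
    (hXne : ∀ i, (X i).Nonempty)
    (A : (i : Fin p) → Matrix (Fin m) (Fin (n i)) ℝ) (b : Fin m → ℝ)
    (hA : ∀ i, Function.Injective fun x : Fin (n i) → ℝ => (A i).mulVec x)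
    (hsol : (VIsol θ X A b).Nonempty)
    {β : ℝ} (hβ : 0 < β) {α : ℝ} (hα : α ∈ Set.Ioo (0 : ℝ) 2)
    (ξ : ℕ → ((Fin p ⊕ Unit) × Fin m → ℝ))
    (wt : ℕ → ((i : Fin p) → Fin (n i) → ℝ) × (Fin m → ℝ))
    (hstep : ∀ k, ALMStep β θ X A b (ξ k) (wt k))
    (hrel : ∀ k, ξ (k + 1) = ξ k - α • (calM p m β).mulVec (ξ k - Pmap A (wt k))) :
    ∃ ξinf ∈ Pmap A '' VIsol θ X A b, Filter.Tendsto ξ Filter.atTop (nhds ξinf) := by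
  obtain ⟨hα0, hα2⟩ := hα
  obtain ⟨ws, hws⟩ := hsol
  set c : ℝ := min β (1 / β) with hc
  have hc0 : 0 < c := lt_min hβ (by positivity)
  set γ : ℝ := α * (2 - α) with hγ
  have hγ0 : 0 < γ := by nlinarith
  set d : ℕ → ((Fin p ⊕ Unit) × Fin m → ℝ) := fun k => ξ k - Pmap A (wt k) with hd
  -- the contraction inequality
  have contraction : ∀ ws' ∈ VIsol θ X A b, ∀ k : ℕ,
      nsq (calH p m β) (ξ (k + 1) - Pmap A ws') ≤ nsq (calH p m β) (ξ k - Pmap A ws')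
        - γ * (d k ⬝ᵥ (calD p m β).mulVec (d k)) := by
    intro ws' hws' k
    have hsi := sol_ineq hβ hθ hXconv (hstep k) hws'
    rw [show ξ k - Pmap A (wt k) = d k from rfl] at hsi
    have hnn := quadD_nonneg hβ (d k)
    have hrw : ξ (k + 1) - Pmap A ws'
        = (ξ k - Pmap A ws') - α • (calM p m β).mulVec (d k) := by
      rw [hrel k]; funext q; simp [hd]; ring
    rw [hrw, nsq_step hβ.ne' (ξ k - Pmap A ws') (d k) α]
    unfold nsq
    nlinarith [hsi]
  -- Fejér monotone quantity w.r.t. ws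
  set a : ℕ → ℝ := fun k => nsq (calH p m β) (ξ k - Pmap A ws) with ha
  have ha0 : ∀ k, 0 ≤ a k := fun k => nsq_nonneg hβ _
  have hastep : ∀ k, a (k + 1) ≤ a k - γ * (d k ⬝ᵥ (calD p m β).mulVec (d k)) :=
    fun k => contraction ws hws k
  have haAnti : Antitone a := antitone_nat_of_succ_le fun k => by
    have := hastep k; have := quadD_nonneg hβ (d k); nlinarith
  have haLim : Tendsto a atTop (nhds (⨅ k, a k)) :=
    tendsto_atTop_ciInf haAnti ⟨0, fun x ⟨k, hk⟩ => hk ▸ ha0 k⟩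
  have hdiff : Tendsto (fun k => a k - a (k + 1)) atTop (nhds 0) := by
    have h2 : Tendsto (fun k => a (k + 1)) atTop (nhds (⨅ k, a k)) :=
      haLim.comp (tendsto_add_atTop_nat 1)
    simpa using haLim.sub h2
  have hDtend : Tendsto (fun k => d k ⬝ᵥ (calD p m β).mulVec (d k)) atTop (nhds 0) := by
    apply squeeze_zero (fun k => quadD_nonneg hβ (d k))
      (g := fun k => (a k - a (k + 1)) / γ)
    · intro k
      rw [le_div_iff₀ hγ0]
      have := hastep k
      nlinarith
    · simpa using hdiff.div_const γ
  have hddtend : Tendsto (fun k => d k ⬝ᵥ d k) atTop (nhds 0) := by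
    apply squeeze_zero
      (f := fun k => d k ⬝ᵥ d k)
      (g := fun k => (d k ⬝ᵥ (calD p m β).mulVec (d k)) / c)
      (fun k => (Finset.sum_nonneg fun _ _ => mul_self_nonneg _ : (0:ℝ) ≤ d k ⬝ᵥ d k))
    · intro k
      rw [le_div_iff₀ hc0]
      have := quadD_lower hβ (d k)
      nlinarith
    · simpa using hDtend.div_const c
  have hd0 : Tendsto d atTop (nhds 0) := tendsto_of_dot_self hddtend
  -- boundedness and a convergent subsequence
  have hmem : ∀ k, ξ k ∈ Metric.closedBall (Pmap A ws) (Real.sqrt (a 0 / c)) := by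
    intro k
    rw [Metric.mem_closedBall, dist_pi_le_iff (Real.sqrt_nonneg _)]
    intro q
    rw [Real.dist_eq]
    apply Real.abs_le_sqrt
    have h1 := sq_le_dot_self (ξ k - Pmap A ws) q
    have h2 := quadH_lower (p := p) (m := m) hβ (ξ k - Pmap A ws)
    have h3 : a k ≤ a 0 := haAnti (Nat.zero_le k)
    have h4 : (ξ k - Pmap A ws) ⬝ᵥ (calH p m β).mulVec (ξ k - Pmap A ws) = a k := rfl
    rw [le_div_iff₀ hc0]
    have h5 : (ξ k q - Pmap A ws q) ^ 2 = ((ξ k - Pmap A ws) q) ^ 2 := rfl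
    nlinarith
  obtain ⟨ξinf, -, φ, hφmono, hφtend⟩ :=
    tendsto_subseq_of_bounded Metric.isBounded_closedBall hmem
  -- the projected iterates converge along the subsequence
  have hξtφ : Tendsto (fun k => Pmap A (wt (φ k))) atTop (nhds ξinf) := by
    have heq : (fun k => Pmap A (wt (φ k))) = fun k => (ξ ∘ φ) k - d (φ k) := by
      funext k; funext q; simp [hd]
    rw [heq]
    have := hφtend.sub (hd0.comp hφmono.tendsto_atTop)
    simpa using this
  -- left inverses of the A i
  have hginv : ∀ i, ∃ g : (Fin m → ℝ) →ₗ[ℝ] (Fin (n i) → ℝ),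
      ∀ x, g ((A i).mulVec x) = x := by
    intro i
    have hinj : Function.Injective ⇑((A i).mulVecLin) := by
      exact hA i
    obtain ⟨g, hg⟩ :=
      LinearMap.exists_leftInverse_of_injective ((A i).mulVecLin)
        (LinearMap.ker_eq_bot.mpr hinj)
    refine ⟨g, fun x => ?_⟩
    have := LinearMap.congr_fun hg x
    simpa [Matrix.mulVecLin_apply] using this
  choose g hg using hginv
  set uinf : (i : Fin p) → Fin m → ℝ := fun i => uOf ξinf i with huinf
  have hutend : ∀ i, Tendsto (fun k => (A i).mulVec ((wt (φ k)).1 i)) atTop (nhds (uinf i)) := by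
    intro i
    rw [tendsto_pi_nhds]
    intro j
    have := tendsto_pi_nhds.mp hξtφ (Sum.inl i, j)
    simpa [Pmap, uOf, huinf] using this
  have huinf_mem : ∀ i, uinf i ∈ LinearMap.range ((A i).mulVecLin) := by
    intro i
    have hcl : IsClosed ((LinearMap.range ((A i).mulVecLin) : Submodule ℝ (Fin m → ℝ)) : Set (Fin m → ℝ)) :=
      Submodule.closed_of_finiteDimensional _
    exact hcl.mem_of_tendsto (hutend i)
      (Filter.Eventually.of_forall fun k => ⟨(wt (φ k)).1 i, by simp [Matrix.mulVecLin_apply]⟩)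
  set xinf : (i : Fin p) → Fin (n i) → ℝ := fun i => g i (uinf i) with hxinf
  have hAxinf : ∀ i, (A i).mulVec (xinf i) = uinf i := by
    intro i
    obtain ⟨x, hx⟩ := huinf_mem i
    rw [Matrix.mulVecLin_apply] at hx
    calc (A i).mulVec (xinf i) = (A i).mulVec (g i (uinf i)) := rfl
      _ = (A i).mulVec (g i ((A i).mulVec x)) := by rw [hx]
      _ = (A i).mulVec x := by rw [hg i x]
      _ = uinf i := hx
  have hxtend : ∀ i, Tendsto (fun k => (wt (φ k)).1 i) atTop (nhds (xinf i)) := by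
    intro i
    have hgc : Continuous (g i) := (g i).continuous_of_finiteDimensional
    have heq : (fun k => (wt (φ k)).1 i)
        = fun k => g i ((A i).mulVec ((wt (φ k)).1 i)) := by
      funext k; rw [hg i]
    rw [heq]
    exact (hgc.tendsto _).comp (hutend i)
  have hxmem : ∀ i, xinf i ∈ X i := fun i =>
    (hXclosed i).mem_of_tendsto (hxtend i)
      (Filter.Eventually.of_forall fun k => ((hstep (φ k)).1 i).1)
  set laminf : Fin m → ℝ := lamOf ξinf with hlaminf
  have hltend : Tendsto (fun k => (wt (φ k)).2) atTop (nhds laminf) := by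
    rw [tendsto_pi_nhds]
    intro j
    have := tendsto_pi_nhds.mp hξtφ (Sum.inr (), j)
    simpa [Pmap, lamOf, hlaminf] using this
  set winf : ((i : Fin p) → Fin (n i) → ℝ) × (Fin m → ℝ) := ⟨fun i => xinf i, laminf⟩ with hwinf
  have hPwinf : Pmap A winf = ξinf := by
    funext q
    obtain ⟨r, j⟩ := q
    rcases r with i | u
    · show (A i).mulVec (xinf i) j = ξinf (Sum.inl i, j)
      rw [hAxinf i]; rfl
    · cases u; rfl
  have hwtφ : Tendsto (fun k => wt (φ k)) atTop (nhds winf) := by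
    have h1 : Tendsto (fun k => (wt (φ k)).1) atTop (nhds (fun i => xinf i)) :=
      tendsto_pi_nhds.mpr hxtend
    have := h1.prodMk_nhds hltend
    simpa using this
  -- the cluster point is a solution
  have hθc : ∀ i, Continuous (θ i) := by
    intro i
    exact continuousOn_univ.mp ((hθ i).continuousOn isOpen_univ)
  have hwinf_sol : winf ∈ VIsol θ X A b := by
    constructor
    · exact fun i => hxmem i
    · intro w hw
      -- pass to the limit in the key inequality
      have hG : Continuous (fun v : ((i : Fin p) → Fin (n i) → ℝ) × (Fin m → ℝ) =>
          thetaSum θ w.1 - thetaSum θ v.1 + dotW (w - v) (Fop A b v)) := by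
        have e : (fun v : ((i : Fin p) → Fin (n i) → ℝ) × (Fin m → ℝ) =>
            thetaSum θ w.1 - thetaSum θ v.1 + dotW (w - v) (Fop A b v))
            = fun v => (thetaSum θ w.1 - ∑ i, θ i (v.1 i))
              + ((∑ i, (w.1 i - v.1 i) ⬝ᵥ (-(((A i)ᵀ).mulVec v.2)))
                + (w.2 - v.2) ⬝ᵥ ((∑ i, (A i).mulVec (v.1 i)) - b)) := by
          funext v
          show thetaSum θ w.1 - thetaSum θ v.1 + dotW (w - v) (Fop A b v) = _
          rw [thetaSum, dotW]
          rfl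
        rw [e]
        apply Continuous.add
        · exact continuous_const.sub (continuous_finset_sum _ fun i _ =>
            (hθc i).comp ((continuous_apply i).comp continuous_fst))
        · apply Continuous.add
          · exact continuous_finset_sum _ fun i _ =>
              Continuous.dotProduct
                (continuous_const.sub ((continuous_apply i).comp continuous_fst))
                ((continuous_const.matrix_mulVec continuous_snd).neg)
          · exact Continuous.dotProduct (continuous_const.sub continuous_snd)
              ((continuous_finset_sum _ fun i _ =>
                continuous_const.matrix_mulVec ((continuous_apply i).comp continuous_fst)).sub
                continuous_const)
      have hd0' : Tendsto (fun k => ξ (φ k) - Pmap A (wt (φ k))) atTop (nhds 0) := by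
        have := hd0.comp hφmono.tendsto_atTop
        simpa [hd, Function.comp_def] using this
      have hR : Continuous (fun s : ((Fin p ⊕ Unit) × Fin m → ℝ) × ((Fin p ⊕ Unit) × Fin m → ℝ) =>
          (Pmap A w - s.1) ⬝ᵥ (calQ p m β).mulVec s.2) :=
        Continuous.dotProduct (continuous_const.sub continuous_fst)
          (continuous_const.matrix_mulVec continuous_snd)
      have hpair : Tendsto (fun k => (Pmap A (wt (φ k)), ξ (φ k) - Pmap A (wt (φ k))))
          atTop (nhds (ξinf, 0)) := hξtφ.prodMk_nhds hd0'
      have hRlim : Tendsto (fun k => (Pmap A w - Pmap A (wt (φ k))) ⬝ᵥ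
          (calQ p m β).mulVec (ξ (φ k) - Pmap A (wt (φ k)))) atTop (nhds 0) := by
        have := (hR.tendsto (ξinf, 0)).comp hpair
        simpa [Matrix.mulVec_zero, Function.comp_def] using this
      have hGlim : Tendsto (fun k => thetaSum θ w.1 - thetaSum θ ((wt (φ k)).1)
          + dotW (w - wt (φ k)) (Fop A b (wt (φ k)))) atTop
          (nhds (thetaSum θ w.1 - thetaSum θ winf.1 + dotW (w - winf) (Fop A b winf))) :=
        (hG.tendsto winf).comp hwtφ
      have hineq : ∀ k, (Pmap A w - Pmap A (wt (φ k))) ⬝ᵥ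
          (calQ p m β).mulVec (ξ (φ k) - Pmap A (wt (φ k)))
          ≤ thetaSum θ w.1 - thetaSum θ ((wt (φ k)).1)
            + dotW (w - wt (φ k)) (Fop A b (wt (φ k))) :=
        fun k => key_ineq hβ hθ hXconv (hstep (φ k)) hw
      have hfinal := le_of_tendsto_of_tendsto' hRlim hGlim hineq
      linarith [hfinal]
  -- full convergence to ξinf
  set bseq : ℕ → ℝ := fun k => nsq (calH p m β) (ξ k - ξinf) with hbseq
  have hbanti : Antitone bseq := antitone_nat_of_succ_le fun k => by
    have h1 := contraction winf hwinf_sol k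
    rw [hPwinf] at h1
    have := quadD_nonneg hβ (d k)
    have := hγ0
    nlinarith
  have hb0 : ∀ k, 0 ≤ bseq k := fun k => nsq_nonneg hβ _
  have hcont : Continuous (fun v : (Fin p ⊕ Unit) × Fin m → ℝ =>
      nsq (calH p m β) (v - ξinf)) := by
    show Continuous fun v : (Fin p ⊕ Unit) × Fin m → ℝ =>
      (v - ξinf) ⬝ᵥ (calH p m β).mulVec (v - ξinf)
    exact Continuous.dotProduct (continuous_id.sub continuous_const)
      (continuous_const.matrix_mulVec (continuous_id.sub continuous_const))
  have hsub0 : Tendsto (fun k => bseq (φ k)) atTop (nhds 0) := by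
    have := (hcont.tendsto ξinf).comp hφtend
    have hval : nsq (calH p m β) (ξinf - ξinf) = 0 := by
      rw [sub_self]
      show (0 : (Fin p ⊕ Unit) × Fin m → ℝ) ⬝ᵥ (calH p m β).mulVec 0 = 0
      rw [zero_dotProduct]
    rw [hval] at this
    simpa [hbseq, Function.comp_def] using this
  have hblim : Tendsto bseq atTop (nhds (⨅ k, bseq k)) :=
    tendsto_atTop_ciInf hbanti ⟨0, fun x ⟨k, hk⟩ => hk ▸ hb0 k⟩
  have hinf0 : (⨅ k, bseq k) = 0 :=
    tendsto_nhds_unique (hblim.comp hφmono.tendsto_atTop) hsub0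
  rw [hinf0] at hblim
  have hvv : Tendsto (fun k => (ξ k - ξinf) ⬝ᵥ (ξ k - ξinf)) atTop (nhds 0) := by
    apply squeeze_zero
      (f := fun k => (ξ k - ξinf) ⬝ᵥ (ξ k - ξinf))
      (g := fun k => bseq k / c)
      (fun k => (Finset.sum_nonneg fun _ _ => mul_self_nonneg _ :
        (0:ℝ) ≤ (ξ k - ξinf) ⬝ᵥ (ξ k - ξinf)))
    · intro k
      rw [le_div_iff₀ hc0]
      have h2 := quadH_lower (p := p) (m := m) hβ (ξ k - ξinf)
      have h4 : (ξ k - ξinf) ⬝ᵥ (calH p m β).mulVec (ξ k - ξinf) = bseq k := rfl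
      nlinarith
    · simpa using hblim.div_const c
  have hfin : Tendsto (fun k => ξ k - ξinf) atTop (nhds 0) := tendsto_of_dot_self hvv
  have htend : Tendsto ξ atTop (nhds ξinf) := by
    have := hfin.add (tendsto_const_nhds (x := ξinf))
    simpa using this
  exact ⟨ξinf, ⟨winf, hwinf_sol, hPwinf⟩, htend⟩
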